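/- Let S = {1, 2, ..., N} ⊂ ℤ be a set of N successive vertices of the line graph ℤ. Then for every φ ∈ ℓ²(ℤ) supported in S, ‖φ‖ ≤ (1/2) sin⁻²(π/(2N+2)) · ‖L_ℤ φ‖, where L_ℤ is the normalized Laplacian on ℤ. -/

import Mathlib

open scoped InnerProductSpace

open Finset in
lemma stmt9_key (N : ℕ) (hN : 0 < N) (a : ℤ → ℝ) :
    ∑ n ∈ Finset.Icc (1 : ℤ) ((N : ℤ) - 1), a n * a (n + 1)
      ≤ Real.cos (Real.pi / (N + 1)) * ∑ n ∈ Finset.Icc (1 : ℤ) (N : ℤ), a n ^ 2 := by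
  set θ : ℝ := Real.pi / (N + 1) with hθ
  have hN1 : (0:ℝ) < (N:ℝ) + 1 := by positivity
  have hθpos : 0 < θ := by positivity
  set v : ℤ → ℝ := fun n => Real.sin (n * θ) with hv
  have hvpos : ∀ n ∈ Finset.Icc (1 : ℤ) (N : ℤ), 0 < v n := by
    intro n hn
    rw [Finset.mem_Icc] at hn
    apply Real.sin_pos_of_pos_of_lt_pi
    · have : (1:ℝ) ≤ (n:ℝ) := by exact_mod_cast hn.1
      nlinarith
    · have h1 : (n:ℝ) ≤ (N:ℝ) := by exact_mod_cast hn.2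
      have : (n:ℝ) * θ < ((N:ℝ)+1) * θ := by nlinarith
      calc (n:ℝ) * θ < ((N:ℝ)+1) * θ := this
        _ = Real.pi := by rw [hθ]; field_simp
  have hv0 : v 0 = 0 := by simp [hv]
  have hvN : v ((N:ℤ) + 1) = 0 := by
    simp only [hv]; push_cast
    have : ((N:ℝ) + 1) * θ = Real.pi := by rw [hθ]; field_simp
    rw [this]; exact Real.sin_pi
  have hrec : ∀ n : ℤ, v (n + 1) + v (n - 1) = 2 * Real.cos θ * v n := by
    intro n
    simp only [hv]
    push_cast
    rw [add_mul, sub_mul, one_mul, Real.sin_add, Real.sin_sub]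
    ring
  have step1 : ∀ n ∈ Finset.Icc (1 : ℤ) ((N:ℤ) - 1),
      a n * a (n + 1) ≤ v (n+1) / (2 * v n) * a n ^ 2 + v n / (2 * v (n+1)) * a (n+1) ^ 2 := by
    intro n hn
    rw [Finset.mem_Icc] at hn
    have h1 : 0 < v n := hvpos n (Finset.mem_Icc.2 ⟨hn.1, by omega⟩)
    have h2 : 0 < v (n+1) := hvpos (n+1) (Finset.mem_Icc.2 ⟨by omega, by omega⟩)
    rw [← sub_nonneg]
    have key : v (n+1) / (2 * v n) * a n ^ 2 + v n / (2 * v (n+1)) * a (n+1) ^ 2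
        - a n * a (n+1)
        = (v (n+1) * a n - v n * a (n+1))^2 / (2 * v n * v (n+1)) := by
      field_simp
      ring
    rw [key]
    positivity
  calc ∑ n ∈ Finset.Icc (1 : ℤ) ((N : ℤ) - 1), a n * a (n + 1)
      ≤ ∑ n ∈ Finset.Icc (1 : ℤ) ((N:ℤ) - 1),
          (v (n+1) / (2 * v n) * a n ^ 2 + v n / (2 * v (n+1)) * a (n+1) ^ 2) :=
        Finset.sum_le_sum step1
    _ = ∑ n ∈ Finset.Icc (1 : ℤ) ((N:ℤ) - 1), v (n+1) / (2 * v n) * a n ^ 2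
        + ∑ n ∈ Finset.Icc (1 : ℤ) ((N:ℤ) - 1), v n / (2 * v (n+1)) * a (n+1) ^ 2 :=
        Finset.sum_add_distrib
    _ = ∑ n ∈ Finset.Icc (1 : ℤ) (N:ℤ), v (n+1) / (2 * v n) * a n ^ 2
        + ∑ n ∈ Finset.Icc (1 : ℤ) (N:ℤ), v (n-1) / (2 * v n) * a n ^ 2 := by
        congr 1
        · apply Finset.sum_subset
          · apply Finset.Icc_subset_Icc_right; omega
          · intro n hn hn'
            rw [Finset.mem_Icc] at hn; rw [Finset.mem_Icc] at hn'
            have : n = (N:ℤ) := by omega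
            subst this
            rw [hvN]
            simp
        · have hmap : Finset.Icc (2:ℤ) (N:ℤ) =
              (Finset.Icc (1:ℤ) ((N:ℤ)-1)).map (addRightEmbedding 1) := by
            rw [Finset.map_add_right_Icc]; norm_num
          have h2 : ∑ n ∈ Finset.Icc (1 : ℤ) ((N:ℤ) - 1), v n / (2 * v (n+1)) * a (n+1) ^ 2
              = ∑ n ∈ Finset.Icc (2:ℤ) (N:ℤ), v (n-1) / (2 * v n) * a n ^ 2 := by
            rw [hmap, Finset.sum_map]
            simp [addRightEmbedding]
          rw [h2]
          apply Finset.sum_subset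
          · apply Finset.Icc_subset_Icc_left; omega
          · intro n hn hn'
            rw [Finset.mem_Icc] at hn; rw [Finset.mem_Icc] at hn'
            have : n = 1 := by omega
            subst this
            norm_num [hv0]
    _ = ∑ n ∈ Finset.Icc (1 : ℤ) (N:ℤ), Real.cos θ * a n ^ 2 := by
        rw [← Finset.sum_add_distrib]
        apply Finset.sum_congr rfl
        intro n hn
        have h1 : 0 < v n := hvpos n hn
        field_simp
        nlinarith [hrec n]
    _ = Real.cos θ * ∑ n ∈ Finset.Icc (1 : ℤ) (N:ℤ), a n ^ 2 := by
        rw [Finset.mul_sum]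

/-- If `S = {1, ..., N} ⊂ ℤ` and `φ ∈ ℓ²(ℤ)` is supported in `S`, then
`‖φ‖ ≤ (1/2) sin⁻²(π/(2N+2)) ‖L_ℤ φ‖`, where `L_ℤ` is the normalized Laplacian on `ℤ`. -/
theorem stmt_9 (L : lp (fun _ : ℤ => ℂ) 2 →L[ℂ] lp (fun _ : ℤ => ℂ) 2)
    (hL : ∀ (f : lp (fun _ : ℤ => ℂ) 2) (n : ℤ),
      L f n = f n - (f (n - 1) + f (n + 1)) / 2)
    (N : ℕ) (hN : 0 < N)
    (φ : lp (fun _ : ℤ => ℂ) 2)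
    (hsupp : ∀ n : ℤ, n ∉ Set.Icc (1 : ℤ) (N : ℤ) → φ n = 0) :
    ‖φ‖ ≤ (1 / 2) * ((Real.sin (Real.pi / (2 * N + 2))) ^ 2)⁻¹ * ‖L φ‖ := by
  classical
  set S : Finset ℤ := Finset.Icc (1:ℤ) (N:ℤ) with hS
  set a : ℤ → ℝ := fun n => ‖φ n‖ with ha
  have ha0 : ∀ n : ℤ, n ∉ S → a n = 0 := by
    intro n hn
    have : φ n = 0 := hsupp n (by simpa [hS, Finset.coe_Icc] using hn)
    simp [ha, this]
  -- ‖φ‖² as a finite sum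
  have hnorm : ‖φ‖ ^ 2 = ∑ n ∈ S, a n ^ 2 := by
    rw [@norm_sq_eq_re_inner ℂ, lp.inner_eq_tsum,
      tsum_eq_sum (s := S) (by
        intro n hn
        have : φ n = 0 := hsupp n (by simpa [hS, Finset.coe_Icc] using hn)
        simp [RCLike.inner_apply, this])]
    rw [map_sum]
    apply Finset.sum_congr rfl
    intro n _
    rw [RCLike.inner_apply', mul_comm, Complex.mul_conj, Complex.normSq_eq_norm_sq,
      RCLike.re_to_complex, Complex.ofReal_re]
  -- the inner product ⟪φ, L φ⟫ lower bound
  have hinner_sum : (⟪φ, L φ⟫_ℂ) = ∑ n ∈ S, (starRingEnd ℂ) (φ n) * (L φ n) := by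
    rw [lp.inner_eq_tsum,
      tsum_eq_sum (s := S) (by
        intro n hn
        have : φ n = 0 := hsupp n (by simpa [hS, Finset.coe_Icc] using hn)
        simp [RCLike.inner_apply, this])]
    apply Finset.sum_congr rfl
    intro n _
    rw [RCLike.inner_apply']
  have hterm : ∀ n ∈ S, a n ^ 2 - (a n * a (n-1) + a n * a (n+1)) / 2
      ≤ ((starRingEnd ℂ) (φ n) * (L φ n)).re := by
    intro n _
    rw [hL φ n]
    have expand : (starRingEnd ℂ) (φ n) * (φ n - (φ (n-1) + φ (n+1)) / 2)
        = (starRingEnd ℂ) (φ n) * (φ n)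
          - ((starRingEnd ℂ) (φ n) * (φ (n-1)) + (starRingEnd ℂ) (φ n) * (φ (n+1))) / 2 := by
      ring
    rw [expand]
    have h1 : ((starRingEnd ℂ) (φ n) * (φ n)).re = a n ^ 2 := by
      rw [mul_comm, Complex.mul_conj, Complex.normSq_eq_norm_sq, Complex.ofReal_re]
    have h2 : ((starRingEnd ℂ) (φ n) * (φ (n-1))).re ≤ a n * a (n-1) := by
      have := (abs_le.1 (Complex.abs_re_le_norm ((starRingEnd ℂ) (φ n) * (φ (n-1))))).2
      rwa [norm_mul, Complex.norm_conj] at this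
    have h3 : ((starRingEnd ℂ) (φ n) * (φ (n+1))).re ≤ a n * a (n+1) := by
      have := (abs_le.1 (Complex.abs_re_le_norm ((starRingEnd ℂ) (φ n) * (φ (n+1))))).2
      rwa [norm_mul, Complex.norm_conj] at this
    rw [Complex.sub_re]
    have : (((starRingEnd ℂ) (φ n) * (φ (n-1)) + (starRingEnd ℂ) (φ n) * (φ (n+1))) / 2).re
        = (((starRingEnd ℂ) (φ n) * (φ (n-1))).re + ((starRingEnd ℂ) (φ n) * (φ (n+1))).re) / 2 := by
      have h2' : ((2:ℂ)) = ((2:ℝ):ℂ) := by norm_num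
      rw [h2', Complex.div_ofReal_re, Complex.add_re]
    rw [this, h1]
    linarith
  -- reindex the two cross sums
  have hcross1 : ∑ n ∈ S, a n * a (n-1) = ∑ n ∈ Finset.Icc (1:ℤ) ((N:ℤ)-1), a n * a (n+1) := by
    have hmap : Finset.Icc (2:ℤ) (N:ℤ) =
        (Finset.Icc (1:ℤ) ((N:ℤ)-1)).map (addRightEmbedding 1) := by
      rw [Finset.map_add_right_Icc]; norm_num
    have e1 : ∑ n ∈ S, a n * a (n-1) = ∑ n ∈ Finset.Icc (2:ℤ) (N:ℤ), a n * a (n-1) := by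
      symm
      apply Finset.sum_subset
      · apply Finset.Icc_subset_Icc_left; omega
      · intro n hn hn'
        rw [hS, Finset.mem_Icc] at hn; rw [Finset.mem_Icc] at hn'
        have : n = 1 := by omega
        subst this
        have : a 0 = 0 := ha0 0 (by simp [hS, Finset.mem_Icc])
        norm_num [this]
    rw [e1, hmap, Finset.sum_map]
    simp [addRightEmbedding, mul_comm]
  have hcross2 : ∑ n ∈ S, a n * a (n+1) = ∑ n ∈ Finset.Icc (1:ℤ) ((N:ℤ)-1), a n * a (n+1) := by
    symm
    apply Finset.sum_subset
    · apply Finset.Icc_subset_Icc_right; omega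
    · intro n hn hn'
      rw [hS, Finset.mem_Icc] at hn; rw [Finset.mem_Icc] at hn'
      have : n = (N:ℤ) := by omega
      subst this
      have : a ((N:ℤ)+1) = 0 := ha0 _ (by simp [hS, Finset.mem_Icc])
      simp [this]
  -- lower bound on re ⟪φ, L φ⟫
  have hlower : ∑ n ∈ S, a n ^ 2 - ∑ n ∈ Finset.Icc (1:ℤ) ((N:ℤ)-1), a n * a (n+1)
      ≤ (⟪φ, L φ⟫_ℂ).re := by
    rw [hinner_sum, Complex.re_sum]
    have : ∑ n ∈ S, (a n ^ 2 - (a n * a (n-1) + a n * a (n+1)) / 2)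
        ≤ ∑ n ∈ S, ((starRingEnd ℂ) (φ n) * (L φ n)).re := Finset.sum_le_sum hterm
    have e : ∑ n ∈ S, (a n ^ 2 - (a n * a (n-1) + a n * a (n+1)) / 2)
        = ∑ n ∈ S, a n ^ 2 - (∑ n ∈ S, a n * a (n-1) + ∑ n ∈ S, a n * a (n+1)) / 2 := by
      rw [Finset.sum_sub_distrib, ← Finset.sum_div, Finset.sum_add_distrib]
    rw [e, hcross1, hcross2] at this
    calc ∑ n ∈ S, a n ^ 2 - ∑ n ∈ Finset.Icc (1:ℤ) ((N:ℤ)-1), a n * a (n+1)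
        = ∑ n ∈ S, a n ^ 2 - (∑ n ∈ Finset.Icc (1:ℤ) ((N:ℤ)-1), a n * a (n+1)
            + ∑ n ∈ Finset.Icc (1:ℤ) ((N:ℤ)-1), a n * a (n+1)) / 2 := by ring
      _ ≤ ∑ n ∈ S, ((starRingEnd ℂ) (φ n) * (L φ n)).re := this
  -- key spectral bound
  set y : ℝ := Real.pi / (2 * (N:ℝ) + 2) with hy
  have hyθ : Real.pi / ((N:ℝ) + 1) = 2 * y := by
    rw [hy]; field_simp
  have hcos : Real.cos (Real.pi / ((N:ℝ) + 1)) = 1 - 2 * Real.sin y ^ 2 := by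
    rw [hyθ, Real.cos_two_mul]
    nlinarith [Real.sin_sq_add_cos_sq y]
  have hkey := stmt9_key N hN a
  have hspec : 2 * Real.sin y ^ 2 * ‖φ‖ ^ 2 ≤ (⟪φ, L φ⟫_ℂ).re := by
    rw [hnorm]
    have hsum_nonneg : 0 ≤ ∑ n ∈ S, a n ^ 2 := Finset.sum_nonneg fun n _ => sq_nonneg _
    rw [hcos] at hkey
    rw [hS] at *
    nlinarith [hlower, hkey]
  have hCS : (⟪φ, L φ⟫_ℂ).re ≤ ‖φ‖ * ‖L φ‖ := by
    exact re_inner_le_norm (𝕜 := ℂ) φ (L φ)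
  have hsin : 0 < Real.sin y := by
    apply Real.sin_pos_of_pos_of_lt_pi
    · rw [hy]; positivity
    · rw [hy]
      have h1 : (1:ℝ) < 2 * (N:ℝ) + 2 := by
        have : (0:ℝ) ≤ (N:ℝ) := Nat.cast_nonneg N
        linarith
      calc Real.pi / (2 * (N:ℝ) + 2) < Real.pi / 1 := by
            apply div_lt_div_of_pos_left Real.pi_pos (by linarith) h1
        _ = Real.pi := by ring
  have hmain : 2 * Real.sin y ^ 2 * ‖φ‖ ^ 2 ≤ ‖φ‖ * ‖L φ‖ := le_trans hspec hCS
  -- conclude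
  have hgoal : (1 / 2 : ℝ) * ((Real.sin y) ^ 2)⁻¹ * ‖L φ‖ = ‖L φ‖ / (2 * Real.sin y ^ 2) := by
    field_simp
  have hy' : Real.sin (Real.pi / (2 * (N:ℝ) + 2)) = Real.sin y := by rw [hy]
  rw [hy', hgoal, le_div_iff₀ (by positivity)]
  rcases eq_or_lt_of_le (norm_nonneg φ) with h0 | h0
  · rw [← h0, zero_mul]
    exact norm_nonneg _
  · set x := ‖φ‖ with hx
    set zn := ‖L φ‖ with hz
    nlinarith [hmain, h0, hsin]
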